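/- Let P=(x₁,y₁) be a point on the twisted Edwards curve E with 1+d·x₁²y₁² ≠ 0 and 1−d·x₁²y₁² ≠ 0, and let [2]P = (x₃,y₃) be obtained from the addition formulas with Q = P. Set r = x₁²y₁². If d²r² ≠ 1, then x₃²y₃² = (4d²r³ + (8d − 16a)r² + 4r)/(d⁴r⁴ − 2d²r² + 1). -/

import Mathlib

/-- Doubling for the degree-8 compression `f₈(x,y) = x²y²` on the twisted
Edwards curve `a·x² + y² = 1 + d·x²·y²`. -/
theorem edwards_deg8_doubling {K : Type*} [Field K] (a d : K)
    (hchar : (2 : K) ≠ 0) (ha : a ≠ 0) (hd : d ≠ 0) (had : a ≠ d)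
    (x1 y1 x3 y3 : K)
    (hP : a * x1 ^ 2 + y1 ^ 2 = 1 + d * x1 ^ 2 * y1 ^ 2)
    (hden1 : 1 + d * x1 ^ 2 * y1 ^ 2 ≠ 0)
    (hden2 : 1 - d * x1 ^ 2 * y1 ^ 2 ≠ 0)
    (hx3 : x3 = (x1 * y1 + y1 * x1) / (1 + d * x1 * x1 * y1 * y1))
    (hy3 : y3 = (y1 * y1 - a * x1 * x1) / (1 - d * x1 * x1 * y1 * y1))
    (r : K) (hr : r = x1 ^ 2 * y1 ^ 2)
    (hM0 : d ^ 2 * r ^ 2 ≠ 1) :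
    x3 ^ 2 * y3 ^ 2 = (4 * d ^ 2 * r ^ 3 + (8 * d - 16 * a) * r ^ 2 + 4 * r)
      / (d ^ 4 * r ^ 4 - 2 * d ^ 2 * r ^ 2 + 1) := by
  subst hr hx3 hy3
  have h1 : (1 + d * x1 * x1 * y1 * y1) ≠ 0 := by
    intro h; apply hden1; linear_combination h
  have h2 : (1 - d * x1 * x1 * y1 * y1) ≠ 0 := by
    intro h; apply hden2; linear_combination h
  have hM : d ^ 4 * (x1 ^ 2 * y1 ^ 2) ^ 4 - 2 * d ^ 2 * (x1 ^ 2 * y1 ^ 2) ^ 2 + 1 ≠ 0 := by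
    intro h
    apply sub_ne_zero.mpr (Ne.symm hM0)
    have h2' : (1 - d ^ 2 * (x1 ^ 2 * y1 ^ 2) ^ 2) ^ 2 = 0 := by linear_combination h
    exact pow_eq_zero_iff two_ne_zero |>.mp h2'
  field_simp
  rw [div_eq_div_iff (mul_ne_zero (pow_ne_zero 2 (by intro h; apply hden1; linear_combination h))
    (pow_ne_zero 2 (by intro h; apply hden2; linear_combination h))) (by intro h; apply hM; linear_combination h)]
  linear_combination (4 * (x1 ^ 2 * y1 ^ 2) * (a * x1 ^ 2 + y1 ^ 2 + 1 + d * x1 ^ 2 * y1 ^ 2) *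
    (d ^ 4 * (x1 ^ 2 * y1 ^ 2) ^ 4 - 2 * d ^ 2 * (x1 ^ 2 * y1 ^ 2) ^ 2 + 1)) * hP
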